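/- For all real x ≥ 1, 1/(x+1) − ln(P(x)/(5040x⁷)) < 0, where P(x) = 5040x⁷ + 5040x⁶ − 2520x⁵ + 840x⁴ + 210x³ − 798x² + 1057x − 1. -/

import Mathlib

theorem stmt_17 (x : ℝ) (hx : 1 ≤ x) :
    1/(x+1) - Real.log ((5040*x^7 + 5040*x^6 - 2520*x^5 + 840*x^4 + 210*x^3 - 798*x^2
      + 1057*x - 1) / (5040*x^7)) < 0 := by
  have hx0 : (0:ℝ) < x := lt_of_lt_of_le one_pos hx
  have hx1 : (0:ℝ) < x + 1 := by linarith
  set t : ℝ := 1/(x+1) with ht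
  have ht0 : 0 ≤ t := by positivity
  have ht1 : t ≤ 1 := by
    rw [ht, div_le_one hx1]; linarith
  have hP : (0:ℝ) < 5040*x^7 + 5040*x^6 - 2520*x^5 + 840*x^4 + 210*x^3 - 798*x^2
      + 1057*x - 1 := by
    have h56 : x^5 ≤ x^6 := pow_le_pow_right₀ hx (by norm_num)
    have h23 : x^2 ≤ x^3 := pow_le_pow_right₀ hx (by norm_num)
    nlinarith [pow_pos hx0 7, pow_pos hx0 5, pow_pos hx0 3, pow_pos hx0 4, sq_nonneg x]
  have hden : (0:ℝ) < 5040*x^7 := by positivity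
  have hQ : (0:ℝ) < (5040*x^7 + 5040*x^6 - 2520*x^5 + 840*x^4 + 210*x^3 - 798*x^2
      + 1057*x - 1) / (5040*x^7) := div_pos hP hden
  rw [sub_neg, Real.lt_log_iff_exp_lt hQ]
  have hb := Real.exp_bound' ht0 ht1 (n := 7) (by norm_num)
  have hb' : Real.exp t ≤ 1 + t + t^2/2 + t^3/6 + t^4/24 + t^5/120 + t^6/720 + t^7/4410 := by
    refine hb.trans_eq ?_
    norm_num [Finset.sum_range_succ, Nat.factorial]
    ring
  refine lt_of_le_of_lt hb' ?_
  have htx : t = 1/(x+1) := ht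
  rw [lt_div_iff₀ hden, htx]
  have h1 : (0:ℝ) < (x+1)^7 := by positivity
  rw [show (1:ℝ)/(x+1) = (x+1)⁻¹ by ring]
  have hinv : ∀ k : ℕ, ((x+1)⁻¹)^k * (x+1)^k = 1 := by
    intro k; rw [← mul_pow, inv_mul_cancel₀ (ne_of_gt hx1), one_pow]
  -- multiply out: reduce to polynomial inequality
  have key : (1 + (x+1)⁻¹ + ((x+1)⁻¹)^2/2 + ((x+1)⁻¹)^3/6 + ((x+1)⁻¹)^4/24
      + ((x+1)⁻¹)^5/120 + ((x+1)⁻¹)^6/720 + ((x+1)⁻¹)^7/4410) * (5040*x^7)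
      * (x+1)^7
      < (5040*x^7 + 5040*x^6 - 2520*x^5 + 840*x^4 + 210*x^3 - 798*x^2
      + 1057*x - 1) * (x+1)^7 := by
    have e1 := hinv 1
    have e2 := hinv 2
    have e3 := hinv 3
    have e4 := hinv 4
    have e5 := hinv 5
    have e6 := hinv 6
    have e7 := hinv 7
    have expand : (1 + (x+1)⁻¹ + ((x+1)⁻¹)^2/2 + ((x+1)⁻¹)^3/6 + ((x+1)⁻¹)^4/24
      + ((x+1)⁻¹)^5/120 + ((x+1)⁻¹)^6/720 + ((x+1)⁻¹)^7/4410) * (5040*x^7)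
      * (x+1)^7
      = 5040*x^7*(x+1)^7 + 5040*x^7*(x+1)^6 + 2520*x^7*(x+1)^5 + 840*x^7*(x+1)^4
        + 210*x^7*(x+1)^3 + 42*x^7*(x+1)^2 + 7*x^7*(x+1) + (8/7)*x^7 := by
      field_simp
      ring
    rw [expand]
    have hf : (5040*x^7 + 5040*x^6 - 2520*x^5 + 840*x^4 + 210*x^3 - 798*x^2
        + 1057*x - 1) * (x+1)^7
        - (5040*x^7*(x+1)^7 + 5040*x^7*(x+1)^6 + 2520*x^7*(x+1)^5 + 840*x^7*(x+1)^4
        + 210*x^7*(x+1)^3 + 42*x^7*(x+1)^2 + 7*x^7*(x+1) + (8/7)*x^7)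
        = 1050*x + 6580*x^2 + 16786*x^3 + 22512*x^4 + 16814*x^5 + 6650*x^6
          + (7629/7)*x^7 - 1 := by ring
    rw [← sub_pos, hf]
    have h2 := pow_pos hx0 2
    have h3 := pow_pos hx0 3
    have h4 := pow_pos hx0 4
    have h5 := pow_pos hx0 5
    have h6 := pow_pos hx0 6
    have h7 := pow_pos hx0 7
    linarith
  exact (mul_lt_mul_iff_of_pos_right h1).mp key
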